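/- The Hilbert-space adjoint C* of the Cesàro operator on ℓ²(ℕ, ℂ) does not have the single-valued extension property (SVEP): there exist a nonempty open set W ⊆ ℂ and an analytic function g : W → ℓ² with g(z) ≠ 0 and (C* − z·I) g(z) = 0 for all z ∈ W. -/

import Mathlib

open Finset Filter Topology Metric Complex
open scoped ENNReal NNReal

/-- `C` is the Cesàro operator on `ℓ²(ℕ, ℂ)`: `(C a)ₙ = (1/(n+1)) ∑_{k=0}^{n} a_k`. -/
def IsCesaro (C : lp (fun _ : ℕ => ℂ) 2 →L[ℂ] lp (fun _ : ℕ => ℂ) 2) : Prop :=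
  ∀ (a : lp (fun _ : ℕ => ℂ) 2) (n : ℕ),
    C a n = (∑ k ∈ Finset.range (n + 1), a k) / (n + 1)

noncomputable def aa (z : ℂ) (n : ℕ) : ℂ :=
  ∏ j ∈ Finset.range n, (1 - 1 / (z * ((j : ℂ) + 1)))

noncomputable def maj (n : ℕ) : ℝ :=
  ∏ j ∈ Finset.range n, (if j < 10 then (6 : ℝ) else 1 - 7 / (6 * ((j : ℝ) + 1)))

lemma maj_factor_pos (j : ℕ) : 0 < (if j < 10 then (6 : ℝ) else 1 - 7 / (6 * ((j : ℝ) + 1))) := by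
  split
  · norm_num
  · rename_i h
    have hj : (10 : ℝ) ≤ (j : ℝ) := by exact_mod_cast Nat.not_lt.mp h
    have : 7 / (6 * ((j : ℝ) + 1)) ≤ 7 / 66 := by
      apply div_le_div_of_nonneg_left (by norm_num) (by norm_num) ?_
      nlinarith
    linarith

lemma maj_pos (n : ℕ) : 0 < maj n :=
  Finset.prod_pos fun j _ => maj_factor_pos j

lemma maj_succ {n : ℕ} (hn : 10 ≤ n) :
    maj (n + 1) = maj n * (1 - 7 / (6 * ((n : ℝ) + 1))) := by
  rw [maj, Finset.prod_range_succ, if_neg (Nat.not_lt.mpr hn)]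
  rfl

lemma summable_maj : Summable maj := by
  have key : ∀ M : ℕ, ∑ n ∈ Finset.range (10 + M), maj n + 6 * (10 + M) * maj (10 + M)
      = ∑ n ∈ Finset.range 10, maj n + 60 * maj 10 := by
    intro M
    induction M with
    | zero => norm_num
    | succ M ih =>
      have hrec := maj_succ (n := 10 + M) (by omega)
      have h1 : 10 + (M + 1) = (10 + M) + 1 := by omega
      rw [h1, Finset.sum_range_succ]
      have hne : ((10 + M : ℕ) : ℝ) + 1 ≠ 0 := by positivity
      have hy : 6 * (((10 + M : ℕ) : ℝ) + 1) * maj (10 + M + 1)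
          = (6 * (((10 + M : ℕ) : ℝ) + 1) - 7) * maj (10 + M) := by
        rw [hrec]; field_simp
      push_cast at ih hy ⊢
      linear_combination ih + hy
  apply summable_of_sum_range_le (c := ∑ n ∈ Finset.range 10, maj n + 60 * maj 10)
    (fun n => (maj_pos n).le)
  intro N
  calc ∑ n ∈ Finset.range N, maj n ≤ ∑ n ∈ Finset.range (10 + N), maj n := by
        apply Finset.sum_le_sum_of_subset_of_nonneg
        · exact Finset.range_subset_range.mpr (by omega)
        · exact fun i _ _ => (maj_pos i).le
    _ ≤ _ := by
        have h1 := key N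
        have h2 : (0:ℝ) ≤ 6 * ((10 + N : ℕ) : ℝ) * maj (10 + N) :=
          mul_nonneg (by positivity) (maj_pos (10 + N)).le
        push_cast at h1 h2
        linarith

section ball
variable {z : ℂ}

lemma hz_dist (hz : z ∈ Metric.closedBall (1 : ℂ) (1/4)) : ‖z - 1‖ ≤ 1/4 := by
  simpa [Metric.mem_closedBall, dist_eq_norm] using hz

lemma hz_norm (hz : z ∈ Metric.closedBall (1 : ℂ) (1/4)) : (3:ℝ)/4 ≤ ‖z‖ := by
  have h := hz_dist hz
  have h2 := abs_norm_sub_norm_le z 1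
  rw [norm_one] at h2
  have := abs_le.mp (h2.trans h)
  linarith [this.1]

lemma hz_ne (hz : z ∈ Metric.closedBall (1 : ℂ) (1/4)) : z ≠ 0 := by
  intro h
  have := hz_norm hz
  rw [h] at this
  simp at this
  linarith

lemma hw_dist (hz : z ∈ Metric.closedBall (1 : ℂ) (1/4)) : ‖z⁻¹ - 1‖ ≤ 1/3 := by
  have hzn := hz_ne hz
  have h34 := hz_norm hz
  have : z⁻¹ - 1 = (1 - z) / z := by field_simp
  rw [this, norm_div]
  rw [div_le_iff₀ (by linarith)]
  calc ‖1 - z‖ = ‖z - 1‖ := by rw [norm_sub_rev]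
    _ ≤ 1/4 := hz_dist hz
    _ ≤ 1/3 * ‖z‖ := by linarith

lemma hw_re (hz : z ∈ Metric.closedBall (1 : ℂ) (1/4)) : (2:ℝ)/3 ≤ (z⁻¹).re := by
  have h := hw_dist hz
  have h2 : |(z⁻¹ - 1).re| ≤ ‖z⁻¹ - 1‖ := by
    exact Complex.abs_re_le_norm _
  rw [Complex.sub_re, Complex.one_re] at h2
  have := abs_le.mp (h2.trans h)
  linarith [this.1]

lemma hw_norm (hz : z ∈ Metric.closedBall (1 : ℂ) (1/4)) : ‖z⁻¹‖ ≤ 4/3 := by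
  have h := hw_dist hz
  have h3 : z⁻¹ = (z⁻¹ - 1) + 1 := by ring
  calc ‖z⁻¹‖ = ‖(z⁻¹ - 1) + 1‖ := by rw [← h3]
    _ ≤ ‖z⁻¹ - 1‖ + ‖(1:ℂ)‖ := norm_add_le _ _
    _ ≤ 4/3 := by rw [norm_one]; linarith

lemma hw_sq (hz : z ∈ Metric.closedBall (1 : ℂ) (1/4)) : (z⁻¹).re ^ 2 + (z⁻¹).im ^ 2 ≤ 16/9 := by
  have h := hw_norm hz
  have : ‖z⁻¹‖ ^ 2 = (z⁻¹).re ^ 2 + (z⁻¹).im ^ 2 := by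
    rw [Complex.sq_norm, Complex.normSq_apply]; ring
  nlinarith [norm_nonneg (z⁻¹)]

-- norm squared of a factor
lemma factor_normsq (w : ℂ) {c : ℝ} (hc : 0 < c) :
    ‖1 - w * (c : ℂ)⁻¹‖ ^ 2 = 1 - 2 * w.re / c + (w.re ^ 2 + w.im ^ 2) / c ^ 2 := by
  rw [Complex.sq_norm, ← Complex.ofReal_inv]
  simp [Complex.normSq_apply, Complex.sub_re, Complex.sub_im, Complex.mul_re, Complex.mul_im]
  field_simp
  ring

lemma aa_factor_eq (z : ℂ) (j : ℕ) (hzn : z ≠ 0) :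
    1 - 1 / (z * ((j : ℂ) + 1)) = 1 - z⁻¹ * (((j : ℝ) + 1 : ℝ) : ℂ)⁻¹ := by
  push_cast
  rw [one_div, mul_inv]

lemma aa_sq_le (hz : z ∈ Metric.closedBall (1 : ℂ) (1/4)) (n : ℕ) : ‖aa z n‖ ^ 2 ≤ maj n := by
  rw [aa, norm_prod, maj, ← Finset.prod_pow]
  apply Finset.prod_le_prod (fun j _ => by positivity)
  intro j _
  have hzn := hz_ne hz
  have hc : (0:ℝ) < (j : ℝ) + 1 := by positivity
  rw [aa_factor_eq z j hzn, factor_normsq _ hc]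
  have hre := hw_re hz
  have hsq := hw_sq hz
  have hs0 : (0:ℝ) ≤ (z⁻¹).re ^ 2 + (z⁻¹).im ^ 2 := by positivity
  by_cases h : j < 10
  · rw [if_pos h]
    have h1 : 0 ≤ 2 * (z⁻¹).re / ((j:ℝ) + 1) := div_nonneg (by linarith) (by positivity)
    have h2 : ((z⁻¹).re ^ 2 + (z⁻¹).im ^ 2) / ((j:ℝ) + 1) ^ 2 ≤ (z⁻¹).re ^ 2 + (z⁻¹).im ^ 2 :=
      div_le_self hs0 (by nlinarith)
    linarith
  · rw [if_neg h]
    have hj : (10:ℝ) ≤ (j:ℝ) := by exact_mod_cast Nat.not_lt.mp h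
    rw [← sub_nonneg]
    have hkey : (1 - 7 / (6 * ((j:ℝ) + 1))) -
        (1 - 2 * (z⁻¹).re / ((j:ℝ) + 1) + ((z⁻¹).re ^ 2 + (z⁻¹).im ^ 2) / ((j:ℝ) + 1) ^ 2)
        = (12 * (z⁻¹).re * ((j:ℝ) + 1) - 7 * ((j:ℝ) + 1)
            - 6 * ((z⁻¹).re ^ 2 + (z⁻¹).im ^ 2)) / (6 * ((j:ℝ) + 1) ^ 2) := by
      field_simp
      ring
    rw [hkey]
    apply div_nonneg _ (by positivity)
    nlinarith

end ball

lemma summable_inv_sq : Summable (fun n : ℕ => (1 / ((n:ℝ)+1)) ^ 2) := by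
  have h : Summable (fun n : ℕ => 1 / ((n:ℝ)) ^ 2) := Real.summable_one_div_nat_pow.mpr one_lt_two
  have h2 := (summable_nat_add_iff 1).mpr h
  apply h2.congr
  intro n
  push_cast
  rw [div_pow, one_pow]

section ball2
variable {z : ℂ}

lemma summable_aa_sq (hz : z ∈ Metric.closedBall (1 : ℂ) (1/4)) :
    Summable (fun n => ‖aa z n‖ ^ 2) :=
  Summable.of_nonneg_of_le (fun n => by positivity) (fun n => aa_sq_le hz n) summable_maj

lemma norm_nat_add_one (n : ℕ) : ‖((n:ℂ) + 1)‖ = (n:ℝ) + 1 := by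
  have : ((n:ℂ) + 1) = (((n+1:ℕ)):ℂ) := by push_cast; ring
  rw [this, Complex.norm_natCast]
  push_cast; ring

lemma summable_aa_div (hz : z ∈ Metric.closedBall (1 : ℂ) (1/4)) :
    Summable (fun n => aa z n / ((n:ℂ) + 1)) := by
  apply Summable.of_norm
  have hmaj : Summable (fun n : ℕ => (‖aa z n‖ ^ 2 + (1 / ((n:ℝ)+1)) ^ 2) / 2) :=
    ((summable_aa_sq hz).add summable_inv_sq).div_const 2
  apply Summable.of_nonneg_of_le (fun n => norm_nonneg _) _ hmaj
  intro n
  rw [norm_div, norm_nat_add_one]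
  have h1 : (0:ℝ) < (n:ℝ) + 1 := by positivity
  have := sq_nonneg (‖aa z n‖ - 1 / ((n:ℝ)+1))
  have heq : ‖aa z n‖ / ((n:ℝ)+1) = ‖aa z n‖ * (1 / ((n:ℝ)+1)) := by ring
  rw [heq]
  nlinarith

lemma aa_tendsto (hz : z ∈ Metric.closedBall (1 : ℂ) (1/4)) :
    Filter.Tendsto (aa z) Filter.atTop (nhds 0) := by
  rw [tendsto_zero_iff_norm_tendsto_zero]
  have h1 : Filter.Tendsto (fun n => ‖aa z n‖ ^ 2) Filter.atTop (nhds 0) :=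
    (summable_aa_sq hz).tendsto_atTop_zero
  have h2 : Filter.Tendsto (fun n => Real.sqrt (‖aa z n‖ ^ 2)) Filter.atTop (nhds (Real.sqrt 0)) :=
    h1.sqrt
  rw [Real.sqrt_zero] at h2
  exact h2.congr (fun n => Real.sqrt_sq (norm_nonneg _))

/-- The tail sums `S k = ∑_{n ≥ k} aa z n / (n+1)` equal `z * aa z k`. -/
lemma tail_eq (hz : z ∈ Metric.closedBall (1 : ℂ) (1/4)) (k : ℕ) :
    (∑' n : ℕ, if k ≤ n then aa z n / ((n:ℂ) + 1) else 0) = z * aa z k := by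
  set f : ℕ → ℂ := fun n => aa z n / ((n:ℂ) + 1) with hf
  have hsf : Summable f := summable_aa_div hz
  set S : ℕ → ℂ := fun k => ∑' n : ℕ, if k ≤ n then f n else 0 with hSdef
  have hsummS : ∀ k, Summable (fun n => if k ≤ n then f n else 0) := by
    intro k
    apply Summable.of_norm_bounded hsf.norm
    intro n
    split
    · exact le_refl _
    · simp [norm_nonneg]
  -- S k = ∑' n, f (n + k)
  have hS_shift : ∀ k, S k = ∑' n : ℕ, f (n + k) := by
    intro k
    show (∑' n : ℕ, if k ≤ n then f n else 0) = _
    have hinj : Function.Injective (fun n : ℕ => n + k) := fun a b h => by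
      simpa using h
    rw [← Function.Injective.tsum_eq (f := fun n => if k ≤ n then f n else 0) hinj ?_]
    · apply tsum_congr; intro n; rw [if_pos (by omega)]
    · intro x hx
      simp only [Function.mem_support, ne_eq] at hx
      have hkx : k ≤ x := by
        by_contra hkx
        exact hx (if_neg hkx)
      exact ⟨x - k, by simp; omega⟩
  have hS_tendsto : Filter.Tendsto S Filter.atTop (nhds 0) := by
    have := tendsto_sum_nat_add f
    apply this.congr
    intro k
    exact (hS_shift k).symm
  -- recurrence : S k = f k + S (k+1)
  have hS_rec : ∀ k, S k = f k + S (k + 1) := by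
    intro k
    show (∑' n : ℕ, if k ≤ n then f n else 0) = _
    have hptwise : ∀ n : ℕ, (if k ≤ n then f n else 0)
        = (if n = k then f n else 0) + (if k + 1 ≤ n then f n else 0) := by
      intro n
      rcases lt_trichotomy n k with h | h | h
      · rw [if_neg (by omega), if_neg (by omega), if_neg (by omega)]; ring
      · rw [if_pos (by omega), if_pos h, if_neg (by omega)]; ring
      · rw [if_pos (by omega), if_neg (by omega), if_pos (by omega)]; ring
    have hsingle : Summable (fun n => if n = k then f n else 0) := by
      apply summable_of_ne_finset_zero (s := {k})
      intro n hn
      simp only [Finset.mem_singleton] at hn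
      rw [if_neg hn]
    calc (∑' n : ℕ, if k ≤ n then f n else 0)
        = ∑' n : ℕ, ((if n = k then f n else 0) + (if k + 1 ≤ n then f n else 0)) :=
          tsum_congr hptwise
      _ = (∑' n : ℕ, if n = k then f n else 0) + ∑' n : ℕ, (if k + 1 ≤ n then f n else 0) :=
          Summable.tsum_add hsingle (hsummS (k+1))
      _ = f k + S (k + 1) := by
          congr 1
          have : (fun n : ℕ => if n = k then f n else 0) = fun n => if n = k then f k else 0 := by
            ext n; split <;> simp_all
          rw [this]
          exact tsum_ite_eq k (fun _ => f k)
  -- z * aa z recurrence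
  have hzn : z ≠ 0 := hz_ne hz
  have haa_rec : ∀ k : ℕ, z * aa z k = f k + z * aa z (k+1) := by
    intro k
    have : aa z (k+1) = aa z k * (1 - 1 / (z * ((k:ℂ) + 1))) := by
      rw [aa, aa, Finset.prod_range_succ]
    rw [this, hf]
    have hk : ((k:ℂ) + 1) ≠ 0 := by
      intro h
      have : ((k:ℝ) + 1) ≠ 0 := by positivity
      apply this
      exact_mod_cast congrArg Complex.re h
    field_simp
    ring
  -- t k := S k - z * aa z k is constant
  have ht_rec : ∀ k, S k - z * aa z k = S (k+1) - z * aa z (k+1) := by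
    intro k
    rw [hS_rec k, haa_rec k]
    ring
  have ht_const : ∀ k, S k - z * aa z k = S 0 - z * aa z 0 := by
    intro k
    induction k with
    | zero => rfl
    | succ k ih => rw [← ht_rec k, ih]
  have ht_tendsto : Filter.Tendsto (fun k => S k - z * aa z k) Filter.atTop (nhds 0) := by
    have := hS_tendsto.sub ((aa_tendsto hz).const_mul z)
    simpa using this
  have ht0 : S 0 - z * aa z 0 = 0 := by
    have h1 : Filter.Tendsto (fun _ : ℕ => S 0 - z * aa z 0) Filter.atTop (nhds (S 0 - z * aa z 0)) :=
      tendsto_const_nhds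
    have h2 : Filter.Tendsto (fun k => S k - z * aa z k) Filter.atTop (nhds (S 0 - z * aa z 0)) := by
      apply h1.congr
      intro k
      exact (ht_const k).symm
    exact tendsto_nhds_unique h2 ht_tendsto
  have := ht_const k
  rw [ht0] at this
  have : S k = z * aa z k := by linear_combination this
  exact this

end ball2

lemma two_toReal : (2 : ℝ≥0∞).toReal = 2 := by norm_num

lemma rpow_eq_sq (x : ℝ) (hx : 0 ≤ x) : x ^ (2 : ℝ≥0∞).toReal = x ^ 2 := by
  rw [two_toReal, Real.rpow_two]

section ball3
variable {z : ℂ}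

lemma memaa (hz : z ∈ Metric.closedBall (1 : ℂ) (1/4)) : Memℓp (aa z) 2 := by
  apply memℓp_gen
  apply (summable_aa_sq hz).congr
  intro n
  rw [rpow_eq_sq _ (norm_nonneg _)]

open Classical in
noncomputable def gg (z : ℂ) : lp (fun _ : ℕ => ℂ) 2 :=
  if h : z ∈ Metric.closedBall (1 : ℂ) (1/4) then ⟨aa z, memaa h⟩ else 0

lemma gg_apply (hz : z ∈ Metric.closedBall (1 : ℂ) (1/4)) (n : ℕ) : gg z n = aa z n := by
  rw [gg, dif_pos hz]

lemma gg_ne_zero (hz : z ∈ Metric.closedBall (1 : ℂ) (1/4)) : gg z ≠ 0 := by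
  intro h
  have h0 : gg z 0 = aa z 0 := gg_apply hz 0
  rw [h] at h0
  have : aa z 0 = 1 := by simp [aa]
  rw [this] at h0
  have : (0 : lp (fun _ : ℕ => ℂ) 2) 0 = 0 := by
    rw [lp.coeFn_zero]
    rfl
  rw [this] at h0
  exact one_ne_zero h0.symm

end ball3

lemma memv' (v : lp (fun _ : ℕ => ℂ) 2) : Memℓp (fun k => ((‖v k‖ : ℝ) : ℂ)) 2 := by
  apply memℓp_gen
  have h := (memℓp_gen_iff (p := 2) (by rw [two_toReal]; norm_num)).mp (lp.memℓp v)
  apply h.congr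
  intro n
  norm_num

lemma sq_summable_of_lp (u : lp (fun _ : ℕ => ℂ) 2) : Summable fun n => ‖u n‖ ^ 2 := by
  have h := (memℓp_gen_iff (p := 2) (by rw [two_toReal]; norm_num)).mp (lp.memℓp u)
  exact h.congr fun n => rpow_eq_sq _ (norm_nonneg _)

section eigen
variable {z : ℂ} {C : lp (fun _ : ℕ => ℂ) 2 →L[ℂ] lp (fun _ : ℕ => ℂ) 2}

lemma eigen (hC : IsCesaro C) (hz : z ∈ Metric.closedBall (1 : ℂ) (1/4)) :
    ContinuousLinearMap.adjoint C (gg z) = z • gg z := by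
  apply ext_inner_right ℂ
  intro v
  rw [ContinuousLinearMap.adjoint_inner_left, inner_smul_left, lp.inner_eq_tsum,
    lp.inner_eq_tsum]
  simp only [RCLike.inner_apply']
  set b : ℕ → ℂ := fun n => (starRingEnd ℂ) (aa z n) with hb
  set v' : lp (fun _ : ℕ => ℂ) 2 := ⟨fun k => ((‖v k‖ : ℝ) : ℂ), memv' v⟩ with hv'
  set u := C v' with hu
  set σ : ℕ → ℝ := fun n => ∑ k ∈ Finset.range (n+1), ‖v k‖ with hσ
  have hσ0 : ∀ n, 0 ≤ σ n := fun n => Finset.sum_nonneg fun k _ => norm_nonneg _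
  have hun : ∀ n, ‖u n‖ = σ n / ((n:ℝ)+1) := by
    intro n
    rw [hu, hC v' n]
    have hsum : (∑ k ∈ Finset.range (n+1), v' k) = ((σ n : ℝ) : ℂ) := by
      rw [hσ]
      push_cast
      rfl
    rw [hsum, norm_div, norm_nat_add_one, Complex.norm_real,
      Real.norm_of_nonneg (hσ0 n)]
  set F : ℕ × ℕ → ℂ := fun p => if p.2 ≤ p.1 then b p.1 / ((p.1:ℂ)+1) * v p.2 else 0 with hF
  have hFnorm : ∀ p : ℕ × ℕ,
      ‖F p‖ = if p.2 ≤ p.1 then ‖aa z p.1‖ / ((p.1:ℝ)+1) * ‖v p.2‖ else 0 := by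
    intro p
    have hFa : F p = if p.2 ≤ p.1 then b p.1 / ((p.1:ℂ)+1) * v p.2 else 0 := rfl
    rw [hFa]
    by_cases h : p.2 ≤ p.1
    · rw [if_pos h, if_pos h]
      have hbn : ‖b p.1‖ = ‖aa z p.1‖ := RCLike.norm_conj _
      rw [norm_mul, norm_div, norm_nat_add_one, hbn]
    · rw [if_neg h, if_neg h, norm_zero]
  have hFnorm_zero : ∀ n k : ℕ, ¬ (k ≤ n) → ‖F (n, k)‖ = 0 := by
    intro n k h
    rw [hFnorm, if_neg h]
  have hfib : ∀ n, ∑' k, ‖F (n, k)‖ = ‖aa z n‖ / ((n:ℝ)+1) * σ n := by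
    intro n
    rw [tsum_eq_sum (s := Finset.range (n+1))
      (fun k hk => hFnorm_zero n k (by simpa [Nat.lt_succ_iff] using hk))]
    rw [hσ, Finset.mul_sum]
    apply Finset.sum_congr rfl
    intro k hk
    rw [hFnorm, if_pos (by simpa [Nat.lt_succ_iff] using Finset.mem_range.mp hk)]
  have hFsummable : Summable F := by
    apply Summable.of_norm
    rw [summable_prod_of_nonneg (fun p => norm_nonneg (F p))]
    constructor
    · intro n
      apply summable_of_ne_finset_zero (s := Finset.range (n+1))
      intro k hk
      exact hFnorm_zero n k (by simpa [Nat.lt_succ_iff] using hk)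
    · apply Summable.congr _ (fun n => (hfib n).symm)
      have hbound : ∀ n, ‖aa z n‖ / ((n:ℝ)+1) * σ n
          ≤ (‖aa z n‖ ^ 2 + ‖u n‖ ^ 2) / 2 := by
        intro n
        have h1 : ‖aa z n‖ / ((n:ℝ)+1) * σ n = ‖aa z n‖ * ‖u n‖ := by
          rw [hun]
          ring
        rw [h1]
        nlinarith [sq_nonneg (‖aa z n‖ - ‖u n‖)]
      apply Summable.of_nonneg_of_le _ hbound
        (((summable_aa_sq hz).add (sq_summable_of_lp u)).div_const 2)
      intro n
      have := hσ0 n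
      positivity
  have hrow : ∀ n, b n * (C v) n = ∑' k, F (n, k) := by
    intro n
    have hFa : ∀ k : ℕ, F (n, k) = if k ≤ n then b n / ((n:ℂ)+1) * v k else 0 :=
      fun k => rfl
    rw [hC v n, tsum_eq_sum (s := Finset.range (n+1))
      (fun k hk => by
        rw [hFa k]
        exact if_neg (by simpa [Nat.lt_succ_iff] using hk))]
    have h1 : ∑ k ∈ Finset.range (n+1), F (n, k)
        = b n / ((n:ℂ)+1) * ∑ k ∈ Finset.range (n+1), v k := by
      rw [Finset.mul_sum]
      apply Finset.sum_congr rfl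
      intro k hk
      rw [hFa k, if_pos (by simpa [Nat.lt_succ_iff] using Finset.mem_range.mp hk)]
    rw [h1]
    ring
  have hcol : ∀ k, ∑' n, F (n, k) = (starRingEnd ℂ) z * (b k * v k) := by
    intro k
    have h1 : ∀ n, F (n, k) = (if k ≤ n then b n / ((n:ℂ)+1) else 0) * v k := by
      intro n
      have hFa : F (n, k) = if k ≤ n then b n / ((n:ℂ)+1) * v k else 0 := rfl
      rw [hFa]
      split
      · rfl
      · rw [zero_mul]
    rw [tsum_congr h1, tsum_mul_right]
    have h2 : (∑' n : ℕ, if k ≤ n then b n / ((n:ℂ)+1) else 0)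
        = (starRingEnd ℂ) (z * aa z k) := by
      rw [starRingEnd_apply, ← tail_eq hz k, tsum_star]
      apply tsum_congr
      intro n
      by_cases h : k ≤ n
      · rw [if_pos h]
        have hstar : star (if k ≤ n then aa z n / ((n:ℂ)+1) else 0)
            = star (aa z n / ((n:ℂ)+1)) := by rw [if_pos h]
        rw [hstar, star_div₀]
        have h3 : star ((n:ℂ)+1) = ((n:ℂ)+1) := by
          rw [star_add, star_one, star_natCast]
        rw [h3]
        rfl
      · rw [if_neg h]
        have hstar : star (if k ≤ n then aa z n / ((n:ℂ)+1) else 0) = star (0:ℂ) := by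
          rw [if_neg h]
        rw [hstar, star_zero]
    rw [h2, map_mul]
    ring
  calc (∑' n, (starRingEnd ℂ) (gg z n) * (C v) n)
      = ∑' n, b n * (C v) n := tsum_congr (fun n => by rw [gg_apply hz, hb])
    _ = ∑' n, ∑' k, F (n, k) := tsum_congr hrow
    _ = ∑' (k) (n), F (n, k) := (Summable.tsum_comm (by exact hFsummable)).symm
    _ = ∑' k, (starRingEnd ℂ) z * (b k * v k) := tsum_congr hcol
    _ = (starRingEnd ℂ) z * ∑' k, b k * v k := tsum_mul_left
    _ = (starRingEnd ℂ) z * ∑' k, (starRingEnd ℂ) (gg z k) * v k := by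
        congr 1
        exact tsum_congr (fun k => by rw [gg_apply hz, hb])

end eigen

noncomputable def ggN (N : ℕ) (z : ℂ) : lp (fun _ : ℕ => ℂ) 2 :=
  ∑ n ∈ Finset.range N, aa z n • lp.single 2 n (1:ℂ)

lemma ggN_apply (N : ℕ) (z : ℂ) (m : ℕ) :
    ggN N z m = if m < N then aa z m else 0 := by
  rw [ggN]
  have h1 : (↑(∑ n ∈ Finset.range N, aa z n • lp.single 2 n (1:ℂ)) : ∀ _ : ℕ, ℂ) m
      = ∑ n ∈ Finset.range N, (aa z n • lp.single 2 n (1:ℂ)) m := by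
    rw [lp.coeFn_sum]
    simp
  rw [h1]
  have h2 : ∀ n, ((aa z n • lp.single 2 n (1:ℂ) : lp (fun _ : ℕ => ℂ) 2)) m
      = aa z n * ((lp.single 2 n (1:ℂ) : lp (fun _ : ℕ => ℂ) 2) m) := by
    intro n
    rw [lp.coeFn_smul]
    rfl
  by_cases h : m < N
  · rw [if_pos h, Finset.sum_eq_single m]
    · rw [h2, lp.single_apply_self, mul_one]
    · intro n _ hn
      rw [h2, lp.single_apply_ne 2 n _ (Ne.symm hn), mul_zero]
    · intro hm
      exact absurd (Finset.mem_range.mpr h) hm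
  · rw [if_neg h]
    apply Finset.sum_eq_zero
    intro n hn
    have : m ≠ n := by
      have := Finset.mem_range.mp hn
      omega
    rw [h2, lp.single_apply_ne 2 n _ this, mul_zero]

lemma tsum_shift {f : ℕ → ℝ} (N : ℕ) (hf : ∀ m, m < N → f m = 0) :
    ∑' m, f m = ∑' m, f (m + N) := by
  have hinj : Function.Injective (fun n : ℕ => n + N) := fun a b h => by simpa using h
  rw [← Function.Injective.tsum_eq hinj ?_]
  · intro x hx
    simp only [Function.mem_support, ne_eq] at hx
    have hkx : N ≤ x := by
      by_contra hkx
      exact hx (hf x (by omega))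
    exact ⟨x - N, by simp; omega⟩

set_option maxHeartbeats 1000000 in
lemma diff_sq_le (N : ℕ) {z : ℂ} (hz : z ∈ Metric.closedBall (1 : ℂ) (1/4)) :
    ‖gg z - ggN N z‖ ^ 2 ≤ ∑' n, maj (n + N) := by
  have hrw := lp.norm_rpow_eq_tsum (p := 2) (by rw [two_toReal]; norm_num) (gg z - ggN N z)
  have hsq : ‖gg z - ggN N z‖ ^ 2 = ∑' m, ‖(gg z - ggN N z) m‖ ^ 2 := by
    rw [← rpow_eq_sq _ (norm_nonneg _), hrw]
    exact tsum_congr fun m => rpow_eq_sq _ (norm_nonneg _)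
  have hcoord : ∀ m, ‖(gg z - ggN N z) m‖ ^ 2
      = if m < N then 0 else ‖aa z m‖ ^ 2 := by
    intro m
    have h1 : (gg z - ggN N z) m = gg z m - ggN N z m := by
      rw [lp.coeFn_sub]
      rfl
    rw [h1, gg_apply hz, ggN_apply]
    by_cases h : m < N
    · rw [if_pos h, if_pos h, sub_self, norm_zero]
      ring
    · rw [if_neg h, if_neg h, sub_zero]
  rw [hsq, tsum_congr hcoord]
  rw [tsum_shift N (fun m hm => by rw [if_pos hm])]
  have hterm : ∀ m : ℕ, (if m + N < N then (0:ℝ) else ‖aa z (m + N)‖ ^ 2)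
      = ‖aa z (m + N)‖ ^ 2 := fun m => by rw [if_neg (by omega)]
  rw [tsum_congr hterm]
  apply Summable.tsum_le_tsum
  · exact fun m => aa_sq_le hz (m + N)
  · exact ((summable_nat_add_iff N).mpr (summable_aa_sq hz))
  · exact ((_root_.summable_nat_add_iff N).mpr summable_maj)

lemma unif : TendstoUniformlyOn (fun N z => ggN N z) gg Filter.atTop
    (Metric.closedBall (1:ℂ) (1/4)) := by
  rw [Metric.tendstoUniformlyOn_iff]
  intro ε hε
  have htail : Filter.Tendsto (fun N => ∑' n, maj (n + N)) Filter.atTop (nhds 0) :=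
    tendsto_sum_nat_add maj
  filter_upwards [htail.eventually_lt_const (by positivity : (0:ℝ) < ε ^ 2)] with N hN z hz
  rw [dist_eq_norm]
  have h1 := diff_sq_le N hz
  have h2 := norm_nonneg (gg z - ggN N z)
  nlinarith

lemma diff_gg : DifferentiableOn ℂ gg (Metric.ball (1:ℂ) (1/4)) := by
  have hsub : Metric.ball (1:ℂ) (1/4) ⊆ Metric.closedBall 1 (1/4) :=
    Metric.ball_subset_closedBall
  apply TendstoLocallyUniformlyOn.differentiableOn
    (unif.mono hsub).tendstoLocallyUniformlyOn ?_ Metric.isOpen_ball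
  apply Filter.Eventually.of_forall
  intro N
  apply DifferentiableOn.fun_sum
  intro n _
  apply DifferentiableOn.smul_const
  simp only [aa]
  apply DifferentiableOn.fun_finset_prod
  intro j _
  apply DifferentiableOn.sub (differentiableOn_const (1:ℂ))
  apply DifferentiableOn.div (differentiableOn_const (1:ℂ))
  · exact differentiableOn_id.mul_const _
  · intro x hx
    apply mul_ne_zero (hz_ne (Metric.ball_subset_closedBall hx))
    intro h
    have h2 : ((j:ℝ) + 1) ≠ 0 := by positivity
    exact h2 (by exact_mod_cast congrArg Complex.re h)

/-- the Hilbert-space adjoint `C*` of the Cesàro operator on ℓ² does not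
have the single-valued extension property: there are a nonempty open `W ⊆ ℂ` and an
analytic `g : W → ℓ²` with `g z ≠ 0` and `(C* - z) g z = 0` on `W`. -/
theorem stmt_18 (C : lp (fun _ : ℕ => ℂ) 2 →L[ℂ] lp (fun _ : ℕ => ℂ) 2)
    (hC : IsCesaro C) :
    ∃ W : Set ℂ, W.Nonempty ∧ IsOpen W ∧
      ∃ g : ℂ → lp (fun _ : ℕ => ℂ) 2, DifferentiableOn ℂ g W ∧
        ∀ z ∈ W, g z ≠ 0 ∧ ContinuousLinearMap.adjoint C (g z) - z • g z = 0 := by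
  refine ⟨Metric.ball (1:ℂ) (1/4), ⟨1, Metric.mem_ball_self (by norm_num)⟩,
    Metric.isOpen_ball, gg, diff_gg, ?_⟩
  intro z hz
  have hz' : z ∈ Metric.closedBall (1:ℂ) (1/4) := Metric.ball_subset_closedBall hz
  exact ⟨gg_ne_zero hz', sub_eq_zero.mpr (eigen hC hz')⟩
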